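/- Let (φ, φ) : Z × Z → Z' × Z' be a diffeomorphism mapping a finite mixture measure μ = Σ_I p(I) μ_I to a finite mixture μ' = Σ_{I'} p'(I') μ'_{I'}, where the components μ_I (resp. μ'_{I'}) are mutually singular (each pair of distinct components has intersection of supports of measure zero under both). Then there exists a bijection ψ between the index sets such that (φ, φ) pushes μ_I forward to μ'_{ψ(I)} and p(I) = p'(ψ(I)) for all I. -/

import Mathlib

open MeasureTheory
open scoped ENNReal

lemma aux_sing_finsum {α : Type*} [MeasurableSpace α] {ι : Type*} [Fintype ι]
    (ν : Measure α) (m : ι → Measure α) (h : ∀ i, ν.MutuallySingular (m i)) :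
    ν.MutuallySingular (∑ i, m i) := by
  classical
  induction (Finset.univ : Finset ι) using Finset.induction with
  | empty => simp
  | insert _ _ hni ih =>
      rw [Finset.sum_insert hni]
      exact (h _).add_right ih

lemma aux_not_self {α : Type*} [MeasurableSpace α] (ν : Measure α)
    [IsProbabilityMeasure ν] : ¬ ν.MutuallySingular ν := by
  rw [MeasureTheory.Measure.MutuallySingular.self_iff]
  exact IsProbabilityMeasure.ne_zero ν

lemma aux_map_sing {α β : Type*} [MeasurableSpace α] [MeasurableSpace β]
    (e : α ≃ᵐ β) {μ ν : Measure α} (h : μ.MutuallySingular ν) :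
    (Measure.map e μ).MutuallySingular (Measure.map e ν) := by
  obtain ⟨s, hs, h1, h2⟩ := h
  refine ⟨e.symm ⁻¹' s, e.symm.measurable hs, ?_, ?_⟩
  · rw [Measure.map_apply e.measurable (e.symm.measurable hs)]
    have : e ⁻¹' (e.symm ⁻¹' s) = s := by ext x; simp
    rwa [this]
  · rw [← Set.preimage_compl, Measure.map_apply e.measurable (e.symm.measurable hs.compl)]
    have : e ⁻¹' (e.symm ⁻¹' sᶜ) = sᶜ := by ext x; simp
    rwa [this]

lemma aux_sing_smul_self {α : Type*} [MeasurableSpace α] {ν : Measure α} {c : ℝ≥0∞}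
    (hc : c ≠ 0) (h : ν.MutuallySingular (c • ν)) : ν.MutuallySingular ν := by
  obtain ⟨s, hs, h1, h2⟩ := h
  refine ⟨s, hs, h1, ?_⟩
  rw [Measure.smul_apply, smul_eq_mul] at h2
  exact (mul_eq_zero.mp h2).resolve_left hc

theorem stmt_10 {Z Z' : Type*} [MeasurableSpace Z] [MeasurableSpace Z']
    {ι ι' : Type*} [Fintype ι] [Fintype ι']
    (φ : Z ≃ᵐ Z')
    (μ : ι → Measure (Z × Z)) (μ' : ι' → Measure (Z' × Z'))
    (hμpr : ∀ I, IsProbabilityMeasure (μ I)) (hμ'pr : ∀ I', IsProbabilityMeasure (μ' I'))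
    (p : ι → ℝ≥0∞) (p' : ι' → ℝ≥0∞)
    (hp : ∀ I, 0 < p I) (hp' : ∀ I', 0 < p' I')
    (hsum : ∑ I, p I = 1) (hsum' : ∑ I', p' I' = 1)
    (hsing : ∀ I J, I ≠ J → (μ I).MutuallySingular (μ J))
    (hsing' : ∀ I' J', I' ≠ J' → (μ' I').MutuallySingular (μ' J'))
    (hdich : ∀ I I', Measure.map (φ.prodCongr φ) (μ I) = μ' I' ∨
      (Measure.map (φ.prodCongr φ) (μ I)).MutuallySingular (μ' I'))
    (hpush : Measure.map (φ.prodCongr φ) (∑ I, p I • μ I) = ∑ I', p' I' • μ' I') :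
    ∃ ψ : ι ≃ ι', ∀ I,
      Measure.map (φ.prodCongr φ) (μ I) = μ' (ψ I) ∧ p I = p' (ψ I) := by
  classical
  set e : (Z × Z) ≃ᵐ (Z' × Z') := φ.prodCongr φ with he
  set ν : ι → Measure (Z' × Z') := fun I => Measure.map e (μ I) with hν
  have hνpr : ∀ I, IsProbabilityMeasure (ν I) := fun I => by
    haveI := hμpr I
    exact Measure.isProbabilityMeasure_map e.measurable.aemeasurable
  have hνsing : ∀ I J, I ≠ J → (ν I).MutuallySingular (ν J) := fun I J h =>
    aux_map_sing e (hsing I J h)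
  have hmapsum : ∑ I, p I • ν I = ∑ I', p' I' • μ' I' := by
    rw [← hpush]
    induction (Finset.univ : Finset ι) using Finset.induction with
    | empty => simp
    | insert _ _ hni ih =>
        rw [Finset.sum_insert hni, Finset.sum_insert hni, Measure.map_add _ _ e.measurable,
          Measure.map_smul, ih]
  -- existence of a match for each I
  have hex : ∀ I, ∃ I', ν I = μ' I' := by
    intro I
    by_contra hcon
    push_neg at hcon
    have hsingall : ∀ I', (ν I).MutuallySingular (μ' I') := fun I' =>
      (hdich I I').resolve_left (hcon I')
    have h1 : (ν I).MutuallySingular (∑ I', p' I' • μ' I') :=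
      aux_sing_finsum _ _ (fun I' => ((hsingall I').symm.smul _).symm)
    rw [← hmapsum] at h1
    have hle : p I • ν I ≤ ∑ J, p J • ν J := by
      rw [Measure.le_iff']
      intro s
      rw [Measure.finset_sum_apply]
      exact Finset.single_le_sum (f := fun J => (p J • ν J) s) (fun _ _ => zero_le)
        (Finset.mem_univ I)
    have h2 : (ν I).MutuallySingular (p I • ν I) := h1.mono le_rfl hle
    haveI := hνpr I
    exact aux_not_self (ν I) (aux_sing_smul_self (hp I).ne' h2)
  choose f hf using hex
  have hinj : Function.Injective f := by
    intro I J hIJ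
    by_contra hne
    have h := hνsing I J hne
    rw [hf I, hf J, hIJ] at h
    haveI := hμ'pr (f J)
    exact aux_not_self (μ' (f J)) h
  have hsurj : Function.Surjective f := by
    intro I'
    by_contra hcon
    push_neg at hcon
    have hsingall : ∀ I, (μ' I').MutuallySingular (ν I) := by
      intro I
      rw [hf I]
      exact hsing' I' (f I) (fun h => hcon I h.symm)
    have h1 : (μ' I').MutuallySingular (∑ J, p J • ν J) :=
      aux_sing_finsum _ _ (fun J => ((hsingall J).symm.smul _).symm)
    rw [hmapsum] at h1
    have hle : p' I' • μ' I' ≤ ∑ J', p' J' • μ' J' := by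
      rw [Measure.le_iff']
      intro s
      rw [Measure.finset_sum_apply]
      exact Finset.single_le_sum (f := fun J' => (p' J' • μ' J') s) (fun _ _ => zero_le)
        (Finset.mem_univ I')
    have h2 : (μ' I').MutuallySingular (p' I' • μ' I') := h1.mono le_rfl hle
    haveI := hμ'pr I'
    exact aux_not_self (μ' I') (aux_sing_smul_self (hp' I').ne' h2)
  -- weights
  have hweight : ∀ I, p I = p' (f I) := by
    intro I
    set I' := f I with hI'
    -- separating sets
    set t : ι' → Set (Z' × Z') := fun J' =>
      if h : J' = I' then ∅ else (hsing' I' J' (fun c => h c.symm)).nullSet with ht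
    have htm : ∀ J', MeasurableSet (t J') := by
      intro J'
      by_cases h : J' = I' <;> simp [ht, h,
        Measure.MutuallySingular.measurableSet_nullSet]
    have ht0 : ∀ J', μ' I' (t J') = 0 := by
      intro J'
      by_cases h : J' = I' <;> simp [ht, h]
    have htc : ∀ J', J' ≠ I' → μ' J' (t J')ᶜ = 0 := by
      intro J' h
      simp [ht, h]
    set A : Set (Z' × Z') := (⋃ J', t J')ᶜ with hA
    have hAm : MeasurableSet A := (MeasurableSet.iUnion htm).compl
    have hA1 : μ' I' A = 1 := by
      haveI := hμ'pr I'
      rw [hA, prob_compl_eq_one_sub (MeasurableSet.iUnion htm),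
        measure_iUnion_null (fun J' => ht0 J'), tsub_zero]
    have hA0 : ∀ J', J' ≠ I' → μ' J' A = 0 := by
      intro J' h
      refine measure_mono_null ?_ (htc J' h)
      rw [hA]
      exact Set.compl_subset_compl.mpr (Set.subset_iUnion t J')
    have heval := congrArg (fun m : Measure (Z' × Z') => m A) hmapsum
    simp only [Measure.finset_sum_apply, Measure.smul_apply, smul_eq_mul] at heval
    have hL : ∑ J, p J * ν J A = p I := by
      rw [Finset.sum_eq_single I]
      · rw [hf I, ← hI', hA1, mul_one]
      · intro J _ hJ
        rw [hf J, hA0 (f J) (fun h => hJ (hinj (h.trans hI'))), mul_zero]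
      · intro h; exact absurd (Finset.mem_univ I) h
    have hR : ∑ J', p' J' * μ' J' A = p' I' := by
      rw [Finset.sum_eq_single I']
      · rw [hA1, mul_one]
      · intro J' _ hJ'
        rw [hA0 J' hJ', mul_zero]
      · intro h; exact absurd (Finset.mem_univ I') h
    rw [hL, hR] at heval
    exact heval
  exact ⟨Equiv.ofBijective f ⟨hinj, hsurj⟩, fun I => ⟨hf I, hweight I⟩⟩
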